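/- Let M be a bounded complete pointed metric space and {M_α : α ∈ A} a collection of closed subsets of M each containing the base point 0. Then ⋂_α F(M_α) = F(⋂_α M_α), where F(N) denotes the closed span of {δ(x) : x ∈ N} inside F(M). -/

import Mathlib

noncomputable section

open Metric Set

/-- The space of real-valued Lipschitz functions on `M` vanishing at `base`. -/
structure Lip0 (M : Type*) [MetricSpace M] (base : M) where
  toFun : M → ℝ
  exists_lip' : ∃ K, LipschitzWith K toFun
  map_base' : toFun base = 0

namespace Lip0

variable {M : Type*} [MetricSpace M] {base : M}

instance : FunLike (Lip0 M base) M ℝ where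
  coe := toFun
  coe_injective := by rintro ⟨f, _, _⟩ ⟨g, _, _⟩ h; simpa using h

@[simp] lemma map_base (f : Lip0 M base) : f base = 0 := f.map_base'

/-- The set of (nonnegative real) Lipschitz constants of `f`. -/
def lipSet (f : Lip0 M base) : Set ℝ :=
  {K | 0 ≤ K ∧ ∀ x y, |f x - f y| ≤ K * dist x y}

lemma lipSet_nonempty (f : Lip0 M base) : (lipSet f).Nonempty := by
  obtain ⟨K, hK⟩ := f.exists_lip'
  exact ⟨K, K.coe_nonneg, fun x y => by
    have h := hK.dist_le_mul x y; rw [Real.dist_eq] at h; exact h⟩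

lemma lipSet_bddBelow (f : Lip0 M base) : BddBelow (lipSet f) :=
  ⟨0, fun K hK => hK.1⟩

lemma sInf_mem_lipSet (f : Lip0 M base) : sInf (lipSet f) ∈ lipSet f := by
  constructor
  · exact le_csInf (lipSet_nonempty f) fun K hK => hK.1
  · intro x y
    rcases eq_or_ne x y with rfl | hxy
    · simp
    · have hd : 0 < dist x y := dist_pos.2 hxy
      rw [← div_le_iff₀ hd]
      exact le_csInf (lipSet_nonempty f) fun K hK => (div_le_iff₀ hd).2 (hK.2 x y)

instance : Zero (Lip0 M base) :=
  ⟨⟨fun _ => 0, ⟨0, LipschitzWith.const 0⟩, rfl⟩⟩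

instance : Add (Lip0 M base) :=
  ⟨fun f g => ⟨fun t => f t + g t, by
    obtain ⟨Kf, hf⟩ := f.exists_lip'; obtain ⟨Kg, hg⟩ := g.exists_lip'
    exact ⟨Kf + Kg, hf.add hg⟩, by simp⟩⟩

instance : Neg (Lip0 M base) :=
  ⟨fun f => ⟨fun t => -f t, by
    obtain ⟨Kf, hf⟩ := f.exists_lip'
    exact ⟨Kf, hf.neg⟩, by simp⟩⟩

def rsmul (c : ℝ) (f : Lip0 M base) : Lip0 M base :=
  ⟨fun t => c * f t, by
    obtain ⟨Kf, hf⟩ := f.exists_lip'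
    refine ⟨⟨|c|, abs_nonneg c⟩ * Kf, LipschitzWith.of_dist_le_mul fun x y => ?_⟩
    have h1 : dist (c * f x) (c * f y) = |c| * |f x - f y| := by
      rw [Real.dist_eq, ← abs_mul, mul_sub]
    have h2 := hf.dist_le_mul x y
    rw [Real.dist_eq] at h2
    rw [h1]
    calc |c| * |f x - f y| ≤ |c| * (Kf * dist x y) :=
          mul_le_mul_of_nonneg_left h2 (abs_nonneg c)
      _ = (⟨|c|, abs_nonneg c⟩ * Kf : NNReal) * dist x y := by
          exact (mul_assoc _ _ _).symm, by simp⟩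

instance : SMul ℝ (Lip0 M base) := ⟨rsmul⟩
instance : SMul ℕ (Lip0 M base) := ⟨fun n => rsmul (n : ℝ)⟩
instance : SMul ℤ (Lip0 M base) := ⟨fun n => rsmul (n : ℝ)⟩
instance : Sub (Lip0 M base) := ⟨fun f g => f + -g⟩

@[simp] lemma coe_zero : ⇑(0 : Lip0 M base) = fun _ => 0 := rfl
@[simp] lemma coe_add (f g : Lip0 M base) : ⇑(f + g) = fun t => f t + g t := rfl
@[simp] lemma coe_neg (f : Lip0 M base) : ⇑(-f) = fun t => -f t := rfl
@[simp] lemma coe_smul (c : ℝ) (f : Lip0 M base) : ⇑(c • f) = fun t => c * f t := rfl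
@[simp] lemma coe_sub (f g : Lip0 M base) : ⇑(f - g) = fun t => f t - g t := by
  show (fun t => f t + -(g t)) = _
  funext t; ring

instance : AddCommGroup (Lip0 M base) :=
  (DFunLike.coe_injective (F := Lip0 M base)).addCommGroup _
    rfl (fun _ _ => rfl) (fun _ => rfl) (fun f g => coe_sub f g)
    (fun f n => by funext t; show (n : ℝ) * f t = n • f t; simp)
    (fun f n => by funext t; show (n : ℝ) * f t = n • f t; simp)

instance : Module ℝ (Lip0 M base) :=
  (DFunLike.coe_injective (F := Lip0 M base)).module ℝ
    { toFun := fun f : Lip0 M base => ⇑f, map_zero' := rfl, map_add' := fun _ _ => rfl }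
    (fun _ _ => rfl)

lemma lipSet_neg (f : Lip0 M base) : lipSet (-f) = lipSet f := by
  unfold lipSet
  ext K
  have e : ∀ x y : M, (-f) x - (-f) y = -(f x - f y) := fun x y => by
    show -f x - -f y = -(f x - f y); ring
  constructor <;> rintro ⟨h0, h⟩ <;> refine ⟨h0, fun x y => ?_⟩
  · have := h x y; rwa [e, abs_neg] at this
  · rw [e, abs_neg]; exact h x y

instance : NormedAddCommGroup (Lip0 M base) :=
  AddGroupNorm.toNormedAddCommGroup
  { toFun := fun f => sInf (lipSet f)
    map_zero' := by
      apply le_antisymm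
      · exact csInf_le (lipSet_bddBelow _) ⟨le_refl 0, fun x y => by simp⟩
      · exact (sInf_mem_lipSet (0 : Lip0 M base)).1
    add_le' := fun f g => by
      apply csInf_le (lipSet_bddBelow _)
      refine ⟨add_nonneg (sInf_mem_lipSet f).1 (sInf_mem_lipSet g).1, fun x y => ?_⟩
      have hf := (sInf_mem_lipSet f).2 x y
      have hg := (sInf_mem_lipSet g).2 x y
      calc |(f + g) x - (f + g) y| = |(f x - f y) + (g x - g y)| := by
            simp [coe_add]; ring_nf
        _ ≤ |f x - f y| + |g x - g y| := abs_add_le _ _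
        _ ≤ sInf (lipSet f) * dist x y + sInf (lipSet g) * dist x y := add_le_add hf hg
        _ = (sInf (lipSet f) + sInf (lipSet g)) * dist x y := by ring
    neg' := fun f => by show sInf (lipSet (-f)) = sInf (lipSet f); rw [lipSet_neg]
    eq_zero_of_map_eq_zero' := fun f hf => by
      have hf' : sInf (lipSet f) = 0 := hf
      apply DFunLike.coe_injective
      funext t
      have h := (sInf_mem_lipSet f).2 t base
      rw [hf', zero_mul] at h
      have h0 : f t - f base = 0 := abs_nonpos_iff.1 h
      show f t = (0 : Lip0 M base) t
      have : (0 : Lip0 M base) t = 0 := rfl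
      rw [this]
      simpa using h0 }

lemma norm_def (f : Lip0 M base) : ‖f‖ = sInf (lipSet f) := rfl

instance : NormedSpace ℝ (Lip0 M base) where
  norm_smul_le c f := by
    rw [norm_def, norm_def, Real.norm_eq_abs]
    apply csInf_le (lipSet_bddBelow _)
    refine ⟨mul_nonneg (abs_nonneg c) (sInf_mem_lipSet f).1, fun x y => ?_⟩
    have hf := (sInf_mem_lipSet f).2 x y
    calc |(c • f) x - (c • f) y| = |c| * |f x - f y| := by
          rw [coe_smul]; rw [← abs_mul]; ring_nf
      _ ≤ |c| * (sInf (lipSet f) * dist x y) :=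
          mul_le_mul_of_nonneg_left hf (abs_nonneg c)
      _ = |c| * sInf (lipSet f) * dist x y := by ring

lemma norm_apply_le (f : Lip0 M base) (x y : M) : |f x - f y| ≤ ‖f‖ * dist x y :=
  (sInf_mem_lipSet f).2 x y

end Lip0

open Lip0 NormedSpace

variable (M : Type*) [MetricSpace M]

/-- The Dirac evaluation functional at `x`. -/
def deltaF (base x : M) : StrongDual ℝ (Lip0 M base) :=
  LinearMap.mkContinuous
    { toFun := fun f => f x
      map_add' := fun _ _ => rfl
      map_smul' := fun _ _ => rfl }
    (dist x base)
    (fun f => by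
      have h := Lip0.norm_apply_le f x base
      simp only [Lip0.map_base, sub_zero] at h
      rw [Real.norm_eq_abs, mul_comm]; exact h)

variable {M}

@[simp] lemma deltaF_apply (base x : M) (f : Lip0 M base) : deltaF M base x f = f x := rfl

/-- The molecule `(δ x - δ y)/d(x,y)`. -/
def molecule (base x y : M) : StrongDual ℝ (Lip0 M base) :=
  (dist x y)⁻¹ • (deltaF M base x - deltaF M base y)

variable (M) in
/-- The Lipschitz-free space over `M`, realized as the closed linear span of the Dirac
evaluations inside the dual of `Lip0 M base`. -/
def FreeSpace (base : M) : Submodule ℝ (StrongDual ℝ (Lip0 M base)) :=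
  (Submodule.span ℝ (Set.range (deltaF M base))).topologicalClosure

variable (M) in
/-- The subspace of the free space generated by the Diracs of a subset `S ⊆ M`. -/
def FreeSpaceOn (base : M) (S : Set M) : Submodule ℝ (StrongDual ℝ (Lip0 M base)) :=
  (Submodule.span ℝ (deltaF M base '' S)).topologicalClosure

lemma deltaF_mem (base x : M) : deltaF M base x ∈ FreeSpace M base :=
  Submodule.le_topologicalClosure _ (Submodule.subset_span ⟨x, rfl⟩)

lemma molecule_mem (base x y : M) : molecule base x y ∈ FreeSpace M base :=
  Submodule.smul_mem _ _ (Submodule.sub_mem _ (deltaF_mem base x) (deltaF_mem base y))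

/-- The molecule as an element of the free space. -/
def mol (base x y : M) : ↥(FreeSpace M base) := ⟨molecule base x y, molecule_mem base x y⟩

/-- The "magic function" of Ivakhno, Kadets and Werner associated to the pair `(p, q)`,
with base point `o`. -/
def magicFun (o p q : M) (t : M) : ℝ :=
  (dist p q / 2) *
    ((dist t q - dist t p) / (dist t q + dist t p) -
      (dist o q - dist o p) / (dist o q + dist o p))



namespace APAux

open Filter

variable {M : Type*} [MetricSpace M] {base : M}

/-- Constructor for `Lip0` from an explicit Lipschitz bound. -/
def mkLip0 (F : M → ℝ) (C : ℝ) (hC : 0 ≤ C)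
    (h : ∀ x y, |F x - F y| ≤ C * dist x y) (hb : F base = 0) : Lip0 M base :=
  ⟨F, ⟨⟨C, hC⟩, LipschitzWith.of_dist_le_mul (fun x y => by
    rw [Real.dist_eq]; exact h x y)⟩, hb⟩

@[simp] lemma mkLip0_apply (F : M → ℝ) (C : ℝ) (hC : 0 ≤ C)
    (h : ∀ x y, |F x - F y| ≤ C * dist x y) (hb : F base = 0) (t : M) :
    (mkLip0 F C hC h hb) t = F t := rfl

lemma mkLip0_norm_le (F : M → ℝ) (C : ℝ) (hC : 0 ≤ C)
    (h : ∀ x y, |F x - F y| ≤ C * dist x y) (hb : F base = 0) :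
    ‖mkLip0 F C hC h hb‖ ≤ C := by
  rw [Lip0.norm_def]
  exact csInf_le (Lip0.lipSet_bddBelow _) ⟨hC, fun x y => h x y⟩

lemma abs_apply_le (f : Lip0 M base) (t : M) : |f t| ≤ ‖f‖ * dist t base := by
  have := Lip0.norm_apply_le f t base
  simpa using this

/-- The "easy" direction: an element of `FreeSpaceOn S` kills every function vanishing on `S`. -/
lemma eval_eq_zero_of_mem_freeSpaceOn {S : Set M} {μ : StrongDual ℝ (Lip0 M base)}
    (hμ : μ ∈ FreeSpaceOn M base S) (g : Lip0 M base) (hg : ∀ y ∈ S, g y = 0) :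
    μ g = 0 := by
  have hle : FreeSpaceOn M base S ≤ LinearMap.ker ((ContinuousLinearMap.apply ℝ ℝ g : StrongDual ℝ (Lip0 M base) →L[ℝ] ℝ) : StrongDual ℝ (Lip0 M base) →ₗ[ℝ] ℝ) := by
    apply Submodule.topologicalClosure_minimal
    · rw [Submodule.span_le]
      rintro ν ⟨x, hx, rfl⟩
      simp [LinearMap.mem_ker, hg x hx]
    · exact ContinuousLinearMap.isClosed_ker _
  simpa [LinearMap.mem_ker] using hle hμ

lemma freeSpaceOn_mono {S T : Set M} (h : S ⊆ T) :
    FreeSpaceOn M base S ≤ FreeSpaceOn M base T :=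
  Submodule.topologicalClosure_mono (Submodule.span_mono (Set.image_mono h))

lemma freeSpaceOn_le_freeSpace (S : Set M) :
    FreeSpaceOn M base S ≤ FreeSpace M base :=
  Submodule.topologicalClosure_mono (Submodule.span_mono (by
    rintro _ ⟨x, _, rfl⟩; exact ⟨x, rfl⟩))

/-- Lemma B: an element of the free space is continuous under uniformly Lipschitz
pointwise convergence. -/
lemma tendsto_eval_of_pointwise {μ : StrongDual ℝ (Lip0 M base)} (hμ : μ ∈ FreeSpace M base)
    {ι : Type*} {l : Filter ι} {gs : ι → Lip0 M base} {g : Lip0 M base} {C : ℝ}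
    (hC0 : 0 ≤ C) (hC : ∀ i, ‖gs i‖ ≤ C)
    (hpt : ∀ t, Tendsto (fun i => gs i t) l (nhds (g t))) :
    Tendsto (fun i => μ (gs i)) l (nhds (μ g)) := by
  rw [Metric.tendsto_nhds]
  intro ε hε
  have hK : (0:ℝ) < C + ‖g‖ + 1 := by positivity
  have hμc : μ ∈ closure ((Submodule.span ℝ (Set.range (deltaF M base)) : Submodule ℝ _) : Set _) := by
    have := hμ
    rwa [← SetLike.mem_coe, FreeSpace, Submodule.topologicalClosure_coe] at this
  obtain ⟨ν, hνmem, hνdist⟩ :=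
    Metric.mem_closure_iff.1 hμc (ε / (2 * (C + ‖g‖ + 1))) (by positivity)
  have hν0 : Tendsto (fun i => ν (gs i - g)) l (nhds 0) := by
    clear hνdist
    induction hνmem using Submodule.span_induction with
    | mem x hx =>
      obtain ⟨p, rfl⟩ := hx
      have hq : ∀ i, deltaF M base p (gs i - g) = gs i p - g p := by
        intro i; simp [map_sub]
      simp only [hq]
      simpa using (hpt p).sub_const (g p)
    | zero => simpa using (tendsto_const_nhds : Tendsto (fun _ : ι => (0:ℝ)) l _)
    | add x y hx hy ihx ihy =>
      have := Tendsto.add ihx ihy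
      simpa [ContinuousLinearMap.add_apply] using this
    | smul a x hx ih =>
      have := Tendsto.const_mul a ih
      simpa [ContinuousLinearMap.smul_apply, smul_eq_mul] using this
  have h2 : ∀ᶠ i in l, |ν (gs i - g)| < ε / 2 := by
    have := (Metric.tendsto_nhds.1 hν0) (ε / 2) (by positivity)
    simpa [Real.dist_eq] using this
  filter_upwards [h2] with i hi
  have e1 : μ (gs i) - μ g = (μ - ν) (gs i - g) + ν (gs i - g) := by
    simp only [ContinuousLinearMap.sub_apply, map_sub]
    ring
  have b1 : |(μ - ν) (gs i - g)| ≤ dist μ ν * (C + ‖g‖) := by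
    have h3 : |(μ - ν) (gs i - g)| ≤ ‖μ - ν‖ * ‖gs i - g‖ := by
      simpa [Real.norm_eq_abs] using (μ - ν).le_opNorm (gs i - g)
    have h4 : ‖gs i - g‖ ≤ C + ‖g‖ :=
      le_trans (norm_sub_le _ _) (by gcongr; exact hC i)
    calc |(μ - ν) (gs i - g)| ≤ ‖μ - ν‖ * ‖gs i - g‖ := h3
      _ ≤ ‖μ - ν‖ * (C + ‖g‖) := by
          have := norm_nonneg (μ - ν)
          nlinarith
      _ = dist μ ν * (C + ‖g‖) := by rw [dist_eq_norm]
  have hd : dist μ ν * (C + ‖g‖) ≤ ε / 2 := by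
    have h5 : dist μ ν ≤ ε / (2 * (C + ‖g‖ + 1)) := le_of_lt hνdist
    have h6 : (0:ℝ) ≤ C + ‖g‖ := by positivity
    have h7 : dist μ ν * (C + ‖g‖) ≤ ε / (2 * (C + ‖g‖ + 1)) * (C + ‖g‖) := by
      have := dist_nonneg (x := μ) (y := ν)
      nlinarith
    refine le_trans h7 ?_
    rw [div_mul_eq_mul_div, div_le_div_iff₀ (by positivity) (by norm_num)]
    nlinarith
  calc dist (μ (gs i)) (μ g) = |μ (gs i) - μ g| := by rw [Real.dist_eq]
    _ ≤ |(μ - ν) (gs i - g)| + |ν (gs i - g)| := by rw [e1]; exact abs_add_le _ _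
    _ < ε / 2 + ε / 2 := by
        have := lt_of_le_of_lt (le_refl (|ν (gs i - g)|)) hi
        exact add_lt_add_of_le_of_lt (le_trans b1 hd) this
    _ = ε := by ring

end APAux

namespace APAux

variable {M : Type*} [MetricSpace M] {base : M}

lemma deltaF_base_eq_zero : deltaF M base base = 0 := by
  ext h; simp

/-- The "hard" direction of the duality lemma: if `μ` belongs to the free space over `M`
and kills every Lipschitz function vanishing on `N`, then `μ ∈ F(N)`. -/
lemma mem_freeSpaceOn_of_kills {N : Set M} {μ : StrongDual ℝ (Lip0 M base)}
    (hμ : μ ∈ FreeSpace M base)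
    (hkill : ∀ g : Lip0 M base, (∀ y ∈ N, g y = 0) → μ g = 0) :
    μ ∈ FreeSpaceOn M base N := by
  by_contra hnot
  have hclosed : IsClosed ((FreeSpaceOn M base N : Submodule ℝ _) : Set (StrongDual ℝ (Lip0 M base))) := by
    rw [FreeSpaceOn]
    exact Submodule.isClosed_topologicalClosure _
  obtain ⟨Φ, u, hΦs, hΦμ⟩ :=
    geometric_hahn_banach_closed_point (Submodule.convex _) hclosed hnot
  have hvan : ∀ ν ∈ FreeSpaceOn M base N, Φ ν = 0 := by
    intro ν hν
    by_contra hne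
    have h1 : ∀ c : ℝ, Φ (c • ν) < u := fun c => hΦs _ (Submodule.smul_mem _ _ hν)
    have h2 := h1 ((u + 1) / Φ ν)
    rw [map_smul, smul_eq_mul, div_mul_cancel₀ _ hne] at h2
    linarith
  have hu0 : 0 < u := by
    have := hΦs 0 (Submodule.zero_mem _)
    simpa using this
  have hlip : ∀ x y : M, |Φ (deltaF M base x) - Φ (deltaF M base y)| ≤ ‖Φ‖ * dist x y := by
    intro x y
    have e1 : Φ (deltaF M base x) - Φ (deltaF M base y)
        = Φ (deltaF M base x - deltaF M base y) := by simp
    rw [e1]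
    have hb : ‖deltaF M base x - deltaF M base y‖ ≤ dist x y := by
      apply ContinuousLinearMap.opNorm_le_bound _ dist_nonneg
      intro h
      have h2 := Lip0.norm_apply_le h x y
      have h3 : (deltaF M base x - deltaF M base y) h = h x - h y := by
        simp
      rw [h3]
      simpa [Real.norm_eq_abs, mul_comm] using h2
    calc |Φ (deltaF M base x - deltaF M base y)|
        ≤ ‖Φ‖ * ‖deltaF M base x - deltaF M base y‖ := by
          simpa [Real.norm_eq_abs] using Φ.le_opNorm (deltaF M base x - deltaF M base y)
      _ ≤ ‖Φ‖ * dist x y := by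
          have := norm_nonneg Φ
          nlinarith
  let f0 : Lip0 M base := mkLip0 (fun x => Φ (deltaF M base x)) ‖Φ‖ (norm_nonneg Φ) hlip
    (by show Φ (deltaF M base base) = 0; rw [deltaF_base_eq_zero, map_zero])
  have key : Φ μ = μ f0 := by
    have hsub : FreeSpace M base ≤
        LinearMap.ker ((Φ - ContinuousLinearMap.apply ℝ ℝ f0 : StrongDual ℝ (Lip0 M base) →L[ℝ] ℝ) : StrongDual ℝ (Lip0 M base) →ₗ[ℝ] ℝ) := by
      apply Submodule.topologicalClosure_minimal
      · rw [Submodule.span_le]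
        rintro ν ⟨x, rfl⟩
        have : Φ (deltaF M base x) = deltaF M base x f0 := by
          simp [f0]
        simp [LinearMap.mem_ker, ContinuousLinearMap.sub_apply, this]
      · exact ContinuousLinearMap.isClosed_ker _
    have h4 := hsub hμ
    rw [LinearMap.mem_ker] at h4
    have h5 : Φ μ - μ f0 = 0 := by
      simpa [ContinuousLinearMap.sub_apply] using h4
    linarith
  have hf0N : ∀ y ∈ N, f0 y = 0 := by
    intro y hy
    show Φ (deltaF M base y) = 0
    exact hvan _ (Submodule.le_topologicalClosure _ (Submodule.subset_span ⟨y, hy, rfl⟩))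
  have : Φ μ = 0 := key.trans (hkill f0 hf0N)
  rw [this] at hΦμ
  linarith

end APAux

namespace APAux

open Filter

variable {M : Type*} [MetricSpace M] {base : M}

/- Generic facts about `Finset.fold max 0`. -/

lemma fold_max_nonneg {α : Type*} [DecidableEq α] (F : Finset α) (f : α → ℝ) :
    0 ≤ F.fold max 0 f := by
  induction F using Finset.induction_on with
  | empty => simp
  | @insert a F ha ih =>
    rw [Finset.fold_insert ha]
    exact le_trans ih (le_max_right _ _)

lemma fold_max_le_one {α : Type*} [DecidableEq α] (F : Finset α) (f : α → ℝ)
    (h : ∀ x, f x ≤ 1) : F.fold max 0 f ≤ 1 := by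
  induction F using Finset.induction_on with
  | empty => simp
  | @insert a F ha ih =>
    rw [Finset.fold_insert ha]
    exact max_le (h a) ih

lemma le_fold_max {α : Type*} [DecidableEq α] (F : Finset α) (f : α → ℝ) {x : α}
    (hx : x ∈ F) : f x ≤ F.fold max 0 f := by
  induction F using Finset.induction_on with
  | empty => simp at hx
  | @insert a F ha ih =>
    rw [Finset.fold_insert ha]
    rcases Finset.mem_insert.1 hx with h | h
    · subst h; exact le_max_left _ _
    · exact le_trans (ih h) (le_max_right _ _)

lemma fold_max_lip {α : Type*} [DecidableEq α] (F : Finset α) (f g : α → ℝ) (c : ℝ)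
    (hc : 0 ≤ c) (h : ∀ x, |f x - g x| ≤ c) :
    |F.fold max 0 f - F.fold max 0 g| ≤ c := by
  induction F using Finset.induction_on with
  | empty => simpa
  | @insert a F ha ih =>
    rw [Finset.fold_insert ha, Finset.fold_insert ha]
    refine le_trans (abs_max_sub_max_le_max _ _ _ _) (max_le (h a) ih)

lemma max_add_decomp (a b : ℝ) : max a b = b + max 0 (a - b) := by
  rcases le_total a b with h | h
  · rw [max_eq_right h, max_eq_left (sub_nonpos.2 h), add_zero]
  · rw [max_eq_left h, max_eq_right (sub_nonneg.2 h)]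
    ring

/-- Localization: if `μ (g) ≠ 0` then some piece of `g` supported in an arbitrarily
small ball (centered at a point of the support of `g`) still has nonzero mass. -/
lemma localize {D : ℝ} (hD : ∀ x y : M, dist x y ≤ D)
    {μ : StrongDual ℝ (Lip0 M base)} (hμ : μ ∈ FreeSpace M base)
    {g : Lip0 M base} (hg : μ g ≠ 0) {ρ : ℝ} (hρ : 0 < ρ) :
    ∃ x : M, g x ≠ 0 ∧ ∃ g' : Lip0 M base, μ g' ≠ 0 ∧
      ∀ t, g' t ≠ 0 → g t ≠ 0 ∧ dist t x < ρ := by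
  classical
  have hD0 : 0 ≤ D := le_trans dist_nonneg (hD base base)
  have hL0 : 0 ≤ ‖g‖ := norm_nonneg g
  have hgb : ∀ t, |g t| ≤ ‖g‖ * D := by
    intro t
    refine le_trans (abs_apply_le g t) ?_
    have := hD t base
    nlinarith
  -- hats
  set hat : M → M → ℝ := fun x t => max 0 (1 - dist t x / ρ) with hhat
  have hat_nonneg : ∀ x t, 0 ≤ hat x t := fun x t => le_max_left _ _
  have hat_le_one : ∀ x t, hat x t ≤ 1 := by
    intro x t
    apply max_le (by norm_num)
    have : 0 ≤ dist t x / ρ := div_nonneg dist_nonneg hρ.le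
    linarith
  have hat_self : ∀ x, hat x x = 1 := by
    intro x; simp [hhat]
  have hat_lip : ∀ x t s, |hat x t - hat x s| ≤ (1/ρ) * dist t s := by
    intro x t s
    have h1 := abs_max_sub_max_le_max (0:ℝ) (1 - dist t x / ρ) 0 (1 - dist s x / ρ)
    simp only [sub_self, abs_zero] at h1
    have h1' : |hat x t - hat x s| ≤ |(1 - dist t x / ρ) - (1 - dist s x / ρ)| := by
      refine le_trans h1 ?_
      simp
    have h2 : (1 - dist t x / ρ) - (1 - dist s x / ρ) = (dist s x - dist t x) / ρ := by ring
    rw [h2] at h1'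
    refine le_trans h1' ?_
    rw [abs_div, abs_of_pos hρ]
    have h3 : |dist s x - dist t x| ≤ dist t s := by
      have := abs_dist_sub_le s t x
      rwa [dist_comm s t] at this
    calc |dist s x - dist t x| / ρ ≤ dist t s / ρ := by gcongr
      _ = (1/ρ) * dist t s := by ring
  have hat_supp : ∀ x t, hat x t ≠ 0 → dist t x < ρ := by
    intro x t h
    by_contra hc
    push_neg at hc
    apply h
    have hle : 1 - dist t x / ρ ≤ 0 := by
      rw [sub_nonpos, le_div_iff₀ hρ]
      nlinarith
    simp [hhat, max_eq_left hle]
  -- the weights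
  set W : Finset {t : M // g t ≠ 0} → M → ℝ := fun F t => F.fold max 0 (fun x => hat x.1 t) with hW
  have W_nonneg : ∀ F t, 0 ≤ W F t := fun F t => fold_max_nonneg _ _
  have W_le_one : ∀ F t, W F t ≤ 1 := fun F t => fold_max_le_one _ _ (fun x => hat_le_one _ _)
  have W_lip : ∀ F t s, |W F t - W F s| ≤ (1/ρ) * dist t s := by
    intro F t s
    exact fold_max_lip _ _ _ _ (by positivity) (fun x => hat_lip x.1 t s)
  -- products
  have hprod : ∀ (w : M → ℝ) (c : ℝ), 0 ≤ c → (∀ t, 0 ≤ w t) → (∀ t, w t ≤ 1) →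
      (∀ t s, |w t - w s| ≤ c * dist t s) →
      ∀ t s, |g t * w t - g s * w s| ≤ (‖g‖ + ‖g‖ * D * c) * dist t s := by
    intro w c hc hw0 hw1 hwl t s
    have e : g t * w t - g s * w s = (g t - g s) * w t + g s * (w t - w s) := by ring
    have b1 : |g t - g s| ≤ ‖g‖ * dist t s := Lip0.norm_apply_le g t s
    have b2 : |w t| ≤ 1 := abs_le.2 ⟨by linarith [hw0 t], hw1 t⟩
    have b3 : |g s| ≤ ‖g‖ * D := hgb s
    have b4 : |w t - w s| ≤ c * dist t s := hwl t s
    rw [e]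
    refine le_trans (abs_add_le _ _) ?_
    rw [abs_mul, abs_mul]
    have d0 : (0:ℝ) ≤ dist t s := dist_nonneg
    have a1 : (0:ℝ) ≤ |g t - g s| := abs_nonneg _
    have a2 : (0:ℝ) ≤ |w t| := abs_nonneg _
    have a3 : (0:ℝ) ≤ |g s| := abs_nonneg _
    have a4 : (0:ℝ) ≤ |w t - w s| := abs_nonneg _
    nlinarith
  set C1 : ℝ := ‖g‖ + ‖g‖ * D * (1/ρ) with hC1
  have hC1nn : 0 ≤ C1 := by rw [hC1]; positivity
  set gW : Finset {t : M // g t ≠ 0} → Lip0 M base := fun F =>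
    mkLip0 (fun t => g t * W F t) C1 hC1nn
      (hprod (W F) (1/ρ) (by positivity) (W_nonneg F) (W_le_one F) (W_lip F))
      (by simp) with hgW
  -- convergence along the net of finite subsets of the support
  have hpt : ∀ t, Tendsto (fun F : Finset {t : M // g t ≠ 0} => (gW F) t) atTop (nhds (g t)) := by
    intro t
    by_cases ht : g t = 0
    · have he : ∀ F : Finset {t : M // g t ≠ 0}, (gW F) t = g t := by
        intro F
        rw [hgW]
        simp [ht]
      rw [funext he]
      exact tendsto_const_nhds
    · have he : ∀ F : Finset {t : M // g t ≠ 0}, ({⟨t, ht⟩} : Finset {t : M // g t ≠ 0}) ≤ F → (gW F) t = g t := by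
        intro F hF
        have hmem : (⟨t, ht⟩ : {t : M // g t ≠ 0}) ∈ F := Finset.singleton_subset_iff.1 hF
        have h1 : hat t t ≤ W F t := by
          simp only [hW]
          exact le_fold_max F (fun x => hat x.1 t) hmem
        rw [hat_self t] at h1
        have h2 : W F t = 1 := le_antisymm (W_le_one F t) h1
        simp only [hgW, mkLip0_apply]
        rw [h2]
        ring
      have hEE : (fun _ : Finset {t : M // g t ≠ 0} => g t) =ᶠ[atTop] (fun F => (gW F) t) :=
        eventually_atTop.2 ⟨{⟨t, ht⟩}, fun F hF => (he F hF).symm⟩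
      exact Tendsto.congr' hEE tendsto_const_nhds
  have hnorm : ∀ F : Finset {t : M // g t ≠ 0}, ‖gW F‖ ≤ C1 := by
    intro F
    exact mkLip0_norm_le _ _ _ _ _
  have hTend : Tendsto (fun F : Finset {t : M // g t ≠ 0} => μ (gW F)) atTop (nhds (μ g)) :=
    tendsto_eval_of_pointwise hμ hC1nn hnorm hpt
  obtain ⟨F0, hF0⟩ := (hTend.eventually_ne hg).exists
  -- telescope
  have tele : ∀ F : Finset {t : M // g t ≠ 0}, μ (gW F) ≠ 0 → ∃ x : M, g x ≠ 0 ∧ ∃ g' : Lip0 M base, μ g' ≠ 0 ∧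
      ∀ t, g' t ≠ 0 → g t ≠ 0 ∧ dist t x < ρ := by
    intro F
    induction F using Finset.induction_on with
    | empty =>
      intro h
      exfalso
      apply h
      have hz : gW ∅ = (0 : Lip0 M base) := by
        apply DFunLike.coe_injective
        funext t
        simp only [hgW, mkLip0_apply, hW, Finset.fold_empty, Lip0.coe_zero]
        ring
      rw [hz, map_zero]
    | @insert a F ha ih =>
      intro hne
      have hwd0 : ∀ t, (0:ℝ) ≤ max 0 (hat a.1 t - W F t) := fun t => le_max_left _ _
      have hwd1 : ∀ t, max 0 (hat a.1 t - W F t) ≤ 1 := by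
        intro t
        apply max_le (by norm_num)
        have := W_nonneg F t
        have := hat_le_one a.1 t
        linarith
      have hwdl : ∀ t s, |max 0 (hat a.1 t - W F t) - max 0 (hat a.1 s - W F s)| ≤ (2/ρ) * dist t s := by
        intro t s
        have h1 := abs_max_sub_max_le_max (0:ℝ) (hat a.1 t - W F t) 0 (hat a.1 s - W F s)
        simp only [sub_self, abs_zero] at h1
        have h1' : |max 0 (hat a.1 t - W F t) - max 0 (hat a.1 s - W F s)|
            ≤ |(hat a.1 t - W F t) - (hat a.1 s - W F s)| := le_trans h1 (by simp)
        refine le_trans h1' ?_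
        have e : (hat a.1 t - W F t) - (hat a.1 s - W F s)
            = (hat a.1 t - hat a.1 s) - (W F t - W F s) := by ring
        rw [e]
        refine le_trans (abs_sub (hat a.1 t - hat a.1 s) (W F t - W F s)) ?_
        have := hat_lip a.1 t s
        have := W_lip F t s
        have : (1/ρ) * dist t s + (1/ρ) * dist t s = (2/ρ) * dist t s := by ring
        linarith [hat_lip a.1 t s, W_lip F t s]
      set C2 : ℝ := ‖g‖ + ‖g‖ * D * (2/ρ) with hC2
      have hC2nn : 0 ≤ C2 := by rw [hC2]; positivity
      set gd : Lip0 M base := mkLip0 (fun t => g t * max 0 (hat a.1 t - W F t)) C2 hC2nn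
        (hprod _ (2/ρ) (by positivity) hwd0 hwd1 hwdl) (by simp) with hgd
      have hsplit : gW (insert a F) = gW F + gd := by
        apply DFunLike.coe_injective
        funext t
        have hWins : W (insert a F) t = max (hat a.1 t) (W F t) := by
          rw [hW]
          exact Finset.fold_insert ha
        have e1 : (gW (insert a F)) t = g t * max (hat a.1 t) (W F t) := by
          simp only [hgW, mkLip0_apply, hWins]
        have e2 : ((gW F + gd) : Lip0 M base) t = g t * W F t + g t * max 0 (hat a.1 t - W F t) := by
          rw [Lip0.coe_add]
          simp only [hgW, hgd, mkLip0_apply]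
        show (gW (insert a F)) t = (gW F + gd) t
        rw [e1, e2, max_add_decomp (hat a.1 t) (W F t)]
        ring
      by_cases hgdz : μ gd = 0
      · apply ih
        rw [hsplit, map_add, hgdz, add_zero] at hne
        exact hne
      · refine ⟨a.1, a.2, gd, hgdz, ?_⟩
        intro t ht
        have ht' : g t * max 0 (hat a.1 t - W F t) ≠ 0 := by
          rw [hgd, mkLip0_apply] at ht
          exact ht
        obtain ⟨h1, h2⟩ := mul_ne_zero_iff.1 ht'
        refine ⟨h1, ?_⟩
        have h3 : 0 < max 0 (hat a.1 t - W F t) := lt_of_le_of_ne (le_max_left _ _) (Ne.symm h2)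
        have h4 : 0 < hat a.1 t - W F t := by
          by_contra hc
          push_neg at hc
          rw [max_eq_left hc] at h3
          exact lt_irrefl _ h3
        have h5 : hat a.1 t ≠ 0 := by
          have hW0 := W_nonneg F t
          intro hz
          rw [hz] at h4
          linarith
        exact hat_supp _ _ h5
  exact tele F0 hF0

end APAux

namespace APAux

open Filter

variable {M : Type*} [MetricSpace M] {base : M}

lemma clamp_lip (τ u v : ℝ) : |max (-τ) (min τ u) - max (-τ) (min τ v)| ≤ |u - v| := by
  have h1 := abs_max_sub_max_le_max (-τ) (min τ u) (-τ) (min τ v)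
  have h2 := abs_min_sub_min_le_max τ u τ v
  simp only [sub_self, abs_zero] at h1 h2
  have h1' : |max (-τ) (min τ u) - max (-τ) (min τ v)| ≤ |min τ u - min τ v| :=
    le_trans h1 (by simp)
  have h2' : |min τ u - min τ v| ≤ |u - v| := le_trans h2 (by simp)
  exact le_trans h1' h2'

/-- The core lemma: if `μ` is in the free space, kills every Lipschitz function vanishing on
any of the closed sets `Ms a`, and `f` vanishes on the intersection, then `μ f = 0`. -/
lemma core {A : Type*} [CompleteSpace M]
    (hbdd : Bornology.IsBounded (Set.univ : Set M))
    {Ms : A → Set M} (hclosed : ∀ a, IsClosed (Ms a)) (hbase : ∀ a, base ∈ Ms a)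
    {μ : StrongDual ℝ (Lip0 M base)} (hμ : μ ∈ FreeSpace M base)
    (hkill : ∀ a (g : Lip0 M base), (∀ y ∈ Ms a, g y = 0) → μ g = 0)
    (f : Lip0 M base) (hf : ∀ y ∈ ⋂ a, Ms a, f y = 0) :
    μ f = 0 := by
  by_contra hne
  obtain ⟨D, hD⟩ : ∃ D, ∀ x y : M, dist x y ≤ D := by
    obtain ⟨C, hC⟩ := Metric.isBounded_iff.1 hbdd
    exact ⟨C, fun x y => hC (Set.mem_univ x) (Set.mem_univ y)⟩
  have hf0 : f ≠ 0 := by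
    intro h
    apply hne
    rw [h, map_zero]
  have hLpos : 0 < ‖f‖ := by
    rcases lt_or_eq_of_le (norm_nonneg f) with h | h
    · exact h
    · exact absurd (norm_eq_zero.1 h.symm) hf0
  have hfne : ‖f‖ ≠ 0 := ne_of_gt hLpos
  -- soft thresholds
  have hsthlip : ∀ (τ : ℝ) (x y : M),
      |(f x - max (-τ) (min τ (f x))) - (f y - max (-τ) (min τ (f y)))|
        ≤ (2 * ‖f‖) * dist x y := by
    intro τ x y
    have h1 : |f x - f y| ≤ ‖f‖ * dist x y := Lip0.norm_apply_le f x y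
    have h2 := clamp_lip τ (f x) (f y)
    have e : (f x - max (-τ) (min τ (f x))) - (f y - max (-τ) (min τ (f y)))
        = (f x - f y) - (max (-τ) (min τ (f x)) - max (-τ) (min τ (f y))) := by ring
    rw [e]
    refine le_trans (abs_sub _ _) ?_
    have := le_trans h2 h1
    linarith
  have hsthbase : ∀ τ : ℝ, 0 ≤ τ → f base - max (-τ) (min τ (f base)) = 0 := by
    intro τ hτ
    rw [Lip0.map_base, min_eq_right hτ, max_eq_right (neg_nonpos.2 hτ)]
    ring
  let sth : ℕ → Lip0 M base := fun n =>
    mkLip0 (fun t => f t - max (-(1/((n:ℝ)+1))) (min (1/((n:ℝ)+1)) (f t))) (2*‖f‖)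
      (by positivity) (hsthlip _) (hsthbase _ (by positivity))
  have hsthpt : ∀ t, Tendsto (fun n => sth n t) atTop (nhds (f t)) := by
    intro t
    rw [tendsto_iff_dist_tendsto_zero]
    refine squeeze_zero (fun n => dist_nonneg) (g := fun n : ℕ => 1/((n:ℝ)+1)) ?_
      tendsto_one_div_add_atTop_nhds_zero_nat
    intro n
    have e : sth n t - f t = -(max (-(1/((n:ℝ)+1))) (min (1/((n:ℝ)+1)) (f t))) := by
      show (f t - max (-(1/((n:ℝ)+1))) (min (1/((n:ℝ)+1)) (f t))) - f t = _
      ring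
    rw [Real.dist_eq, e, abs_neg]
    have hτn : (0:ℝ) ≤ 1/((n:ℝ)+1) := by positivity
    refine abs_le.2 ⟨le_max_left _ _, max_le (by linarith) (min_le_left _ _)⟩
  have hsthnorm : ∀ n, ‖sth n‖ ≤ 2*‖f‖ := fun n => mkLip0_norm_le _ _ _ _ _
  have hTend := tendsto_eval_of_pointwise hμ (by positivity) hsthnorm hsthpt
  obtain ⟨n0, hn0⟩ := (hTend.eventually_ne hne).exists
  set τ0 : ℝ := 1/((n0:ℝ)+1) with hτ0def
  have hτ0 : 0 < τ0 := by rw [hτ0def]; positivity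
  set g0 : Lip0 M base := sth n0 with hg0
  have hg0ne : μ g0 ≠ 0 := hn0
  set r0 : ℝ := τ0 / (4*‖f‖) with hr0def
  have hr0 : 0 < r0 := by
    rw [hr0def]
    exact div_pos hτ0 (by nlinarith)
  have hsupp0 : ∀ t, g0 t ≠ 0 → ∀ y ∈ ⋂ a, Ms a, 4*r0 ≤ dist t y := by
    intro t ht y hy
    have h1 : τ0 < |f t| := by
      by_contra hc
      push_neg at hc
      apply ht
      have hc' := abs_le.1 hc
      show f t - max (-τ0) (min τ0 (f t)) = 0
      rw [min_eq_right hc'.2, max_eq_right hc'.1]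
      ring
    have h2 : |f t| ≤ ‖f‖ * dist t y := by
      have h3 := Lip0.norm_apply_le f t y
      rwa [hf y hy, sub_zero] at h3
    have e : 4*r0 = τ0/‖f‖ := by
      rw [hr0def]
      field_simp
    rw [e, div_le_iff₀ hLpos]
    nlinarith
  -- one localization step
  have hstep : ∀ (k : ℕ) (g : Lip0 M base) (x : M),
      μ g ≠ 0 → (∀ t, g t ≠ 0 → (g0 t ≠ 0 ∧ dist t x < r0 / 2^k)) →
      ∃ (g' : Lip0 M base) (x' : M),
        (μ g' ≠ 0 ∧ ∀ t, g' t ≠ 0 → (g0 t ≠ 0 ∧ dist t x' < r0 / 2^(k+1)))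
        ∧ dist x' x < r0 / 2^k ∧ g0 x' ≠ 0 := by
    intro k g x h1 h2
    obtain ⟨x', hx', g', hg', hsupp'⟩ :=
      localize hD hμ h1 (ρ := r0 / 2^(k+1)) (div_pos hr0 (pow_pos two_pos _))
    refine ⟨g', x', ⟨hg', ?_⟩, (h2 x' hx').2, (h2 x' hx').1⟩
    intro t ht
    obtain ⟨hgt, hdt⟩ := hsupp' t ht
    exact ⟨(h2 t hgt).1, hdt⟩
  -- initial state
  have hinit : ∃ (g : Lip0 M base) (x : M),
      (μ g ≠ 0 ∧ ∀ t, g t ≠ 0 → (g0 t ≠ 0 ∧ dist t x < r0 / 2^0)) ∧ g0 x ≠ 0 := by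
    obtain ⟨x', hx', g', hg', hsupp'⟩ := localize hD hμ hg0ne (ρ := r0) hr0
    refine ⟨g', x', ⟨hg', ?_⟩, hx'⟩
    intro t ht
    obtain ⟨hgt, hdt⟩ := hsupp' t ht
    refine ⟨hgt, ?_⟩
    simpa using hdt
  obtain ⟨ginit, xinit, hCinit, hxinit⟩ := hinit
  -- the chain
  let T : ℕ → Type _ := fun k => {p : Lip0 M base × M //
    μ p.1 ≠ 0 ∧ ∀ t, p.1 t ≠ 0 → (g0 t ≠ 0 ∧ dist t p.2 < r0 / 2^k)}
  let next : ∀ k, T k → T (k+1) := fun k p =>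
    ⟨((hstep k p.1.1 p.1.2 p.2.1 p.2.2).choose,
      (hstep k p.1.1 p.1.2 p.2.1 p.2.2).choose_spec.choose),
      (hstep k p.1.1 p.1.2 p.2.1 p.2.2).choose_spec.choose_spec.1⟩
  let seq : ∀ k, T k := fun k => Nat.rec (⟨(ginit, xinit), hCinit⟩ : T 0) next k
  have hseq : ∀ k, μ (seq k).1.1 ≠ 0 ∧
      ∀ t, (seq k).1.1 t ≠ 0 → (g0 t ≠ 0 ∧ dist t (seq k).1.2 < r0 / 2^k) :=
    fun k => (seq k).2
  have hlink : ∀ k, dist (seq (k+1)).1.2 (seq k).1.2 < r0 / 2^k ∧ g0 (seq (k+1)).1.2 ≠ 0 :=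
    fun k => (hstep k (seq k).1.1 (seq k).1.2 (seq k).2.1 (seq k).2.2).choose_spec.choose_spec.2
  set xs : ℕ → M := fun k => (seq k).1.2 with hxs
  have hgeom : ∀ k : ℕ, r0 / 2^k = r0 * (1/2)^k := by
    intro k
    rw [one_div_pow, mul_one_div]
  have hcau : CauchySeq xs := by
    apply cauchySeq_of_le_geometric (1/2 : ℝ) r0 (by norm_num)
    intro n
    have h1 := (hlink n).1
    rw [dist_comm] at h1
    rw [← hgeom n]
    exact le_of_lt h1
  obtain ⟨xl, hxl⟩ := cauchySeq_tendsto_of_complete hcau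
  have hdistlim : ∀ k, dist (xs k) xl ≤ 2 * (r0 * (1/2)^k) := by
    intro k
    have h1 := dist_le_of_le_geometric_of_tendsto (1/2) r0 (by norm_num)
      (fun n => by
        have h2 := (hlink n).1
        rw [dist_comm] at h2
        rw [← hgeom n]
        exact le_of_lt h2) hxl k
    have e : r0 * (1/2)^k / (1 - 1/2) = 2 * (r0 * (1/2)^k) := by
      norm_num
      ring
    rwa [e] at h1
  -- the limit is far from the intersection
  have hfar : ∀ y ∈ ⋂ a, Ms a, r0 ≤ dist xl y := by
    intro y hy
    have hg00 : μ (seq 0).1.1 ≠ 0 := (hseq 0).1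
    have hex : ∃ t, (seq 0).1.1 t ≠ 0 := by
      by_contra hcz
      push_neg at hcz
      apply hg00
      have hzz : (seq 0).1.1 = 0 := by
        apply DFunLike.coe_injective
        funext u
        show (seq 0).1.1 u = (0 : Lip0 M base) u
        rw [hcz u]
        rfl
      rw [hzz, map_zero]
    obtain ⟨t, ht⟩ := hex
    have h1 := (hseq 0).2 t ht
    have h2 : 4*r0 ≤ dist t y := hsupp0 t h1.1 y hy
    have h3 : dist t (xs 0) < r0 := by
      have := h1.2
      simpa using this
    have h4 : dist (xs 0) xl ≤ 2*r0 := by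
      have := hdistlim 0
      simpa using this
    have h5 : dist t y ≤ dist t (xs 0) + dist (xs 0) xl + dist xl y :=
      dist_triangle4 t (xs 0) xl y
    linarith
  obtain ⟨a0, ha0⟩ : ∃ a, xl ∉ Ms a := by
    by_contra hc
    push_neg at hc
    have hmem : xl ∈ ⋂ a, Ms a := Set.mem_iInter.2 hc
    have := hfar xl hmem
    simp only [dist_self] at this
    linarith
  have hσ : 0 < Metric.infDist xl (Ms a0) :=
    ((hclosed a0).notMem_iff_infDist_pos ⟨base, hbase a0⟩).1 ha0
  obtain ⟨k, hk⟩ : ∃ k : ℕ, 3*r0*(1/2)^k < Metric.infDist xl (Ms a0) := by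
    have h6 : Tendsto (fun k : ℕ => 3*r0*(1/2)^k) atTop (nhds 0) := by
      have h7 := tendsto_pow_atTop_nhds_zero_of_lt_one
        (by norm_num : (0:ℝ) ≤ 1/2) (by norm_num : (1:ℝ)/2 < 1)
      simpa using h7.const_mul (3*r0)
    exact (h6.eventually (gt_mem_nhds hσ)).exists
  have hvanish : ∀ y ∈ Ms a0, (seq k).1.1 y = 0 := by
    intro y hy
    by_contra hzy
    have h1 := (hseq k).2 y hzy
    have h2 : dist y (xs k) < r0 * (1/2)^k := by
      rw [← hgeom k]
      exact h1.2
    have h3 := hdistlim k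
    have h4 : Metric.infDist xl (Ms a0) ≤ dist xl y := Metric.infDist_le_dist_of_mem hy
    have h5 : dist xl y ≤ dist xl (xs k) + dist (xs k) y := dist_triangle _ _ _
    rw [dist_comm xl (xs k)] at h5
    rw [dist_comm y (xs k)] at h2
    linarith
  exact (hseq k).1 (hkill a0 (seq k).1.1 hvanish)

end APAux

/-- The Aliaga–Pernecká intersection theorem: for a bounded complete metric space `M` and
closed subsets `M_a` containing the base point, `⋂_a F(M_a) = F(⋂_a M_a)`. -/
theorem stmt_15 {M : Type*} [MetricSpace M] [CompleteSpace M] (base : M)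
    (hbdd : Bornology.IsBounded (Set.univ : Set M))
    {A : Type*} [Nonempty A] (Ms : A → Set M) (hclosed : ∀ a, IsClosed (Ms a))
    (hbase : ∀ a, base ∈ Ms a) :
    (⨅ a, FreeSpaceOn M base (Ms a)) = FreeSpaceOn M base (⋂ a, Ms a) := by
  refine le_antisymm ?_ (le_iInf fun a => APAux.freeSpaceOn_mono (Set.iInter_subset Ms a))
  intro μ hμ
  have hmem : ∀ a, μ ∈ FreeSpaceOn M base (Ms a) := by
    intro a
    exact (Submodule.mem_iInf _).1 hμ a
  have hfree : μ ∈ FreeSpace M base :=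
    APAux.freeSpaceOn_le_freeSpace _ (hmem (Classical.arbitrary A))
  apply APAux.mem_freeSpaceOn_of_kills hfree
  intro g hg
  exact APAux.core hbdd hclosed hbase hfree
    (fun a g' hg' => APAux.eval_eq_zero_of_mem_freeSpaceOn (hmem a) g' hg') g hg
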